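/- Gaussian-type integral lower bound underlying E[L] ≥ (2/3)√(π/2)·√R: Let R ≥ 100 and B ≥ 100 be real numbers, set b₁ = 2/√π, δ = 2/√R, a = 1/(2R(1−δ)), and ψ = −ln(1 − b₁/√(B·R)). Then ∫₀^{δR} exp( −a·t² − (ψ + a)·t − ψ ) dt ≥ (2/3) · √(π/2) · √R. -/

import Mathlib

set_option maxHeartbeats 1000000

private lemma exp_neg_lb (q : ℝ) (h0 : 0 ≤ q) (h16 : q ≤ 16) :
    (1 - q / 16) ^ 16 ≤ Real.exp (-q) := by
  have h1 : (1 - q / 16 : ℝ) ≤ Real.exp (-(q / 16)) := by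
    have := Real.add_one_le_exp (-(q / 16)); linarith
  have h0' : (0:ℝ) ≤ 1 - q / 16 := by linarith
  calc (1 - q / 16) ^ 16 ≤ Real.exp (-(q / 16)) ^ 16 := pow_le_pow_left₀ h0' h1 16
    _ = Real.exp ((16 : ℕ) * (-(q / 16))) := (Real.exp_nat_mul _ 16).symm
    _ = Real.exp (-q) := by rw [show ((16:ℕ):ℝ) * (-(q/16)) = -q by push_cast; ring]

/-- Gaussian-type integral lower bound underlying `E[L] ≥ (2/3)√(π/2)√R`:
with `b₁ = 2/√π`, `δ = 2/√R`, `a = 1/(2R(1−δ))`, `ψ = −ln(1 − b₁/√(BR))`,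
for `R ≥ 100` and `B ≥ 100`,
`∫₀^{δR} exp(−a t² − (ψ+a) t − ψ) dt ≥ (2/3)√(π/2)√R`. -/
theorem gaussian_integral_lower_bound
    (R B b₁ δ a ψ : ℝ) (hR : 100 ≤ R) (hB : 100 ≤ B)
    (hb₁ : b₁ = 2 / Real.sqrt Real.pi)
    (hδ : δ = 2 / Real.sqrt R)
    (ha : a = 1 / (2 * R * (1 - δ)))
    (hψ : ψ = -Real.log (1 - b₁ / Real.sqrt (B * R))) :
    (2 / 3) * Real.sqrt (Real.pi / 2) * Real.sqrt R
      ≤ ∫ t in (0 : ℝ)..(δ * R), Real.exp (-a * t ^ 2 - (ψ + a) * t - ψ) := by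
  have hRpos : (0:ℝ) < R := by linarith
  set s := Real.sqrt R with hs_def
  have hs10 : (10:ℝ) ≤ s := by
    rw [hs_def]
    exact (Real.le_sqrt (by norm_num) (by linarith)).mpr (by norm_num; linarith)
  have hspos : (0:ℝ) < s := by linarith
  have hss : s ^ 2 = R := Real.sq_sqrt (le_of_lt hRpos)
  -- bounds on δ
  have hδval : δ = 2 / s := hδ
  have hδpos : 0 < δ := by rw [hδval]; positivity
  have hδle : δ ≤ 1 / 5 := by
    rw [hδval, div_le_iff₀ hspos]; linarith
  have h1δ : (4:ℝ)/5 ≤ 1 - δ := by linarith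
  -- bounds on a
  have hden : (0:ℝ) < 2 * R * (1 - δ) := by nlinarith
  have hapos : 0 < a := by rw [ha]; exact one_div_pos.mpr hden
  have haeq : a * (2 * R * (1 - δ)) = 1 := by
    rw [ha]; field_simp
  have haR : a * R ≤ 5 / 8 := by nlinarith [mul_pos hapos hRpos]
  have has : a * s ≤ 1 / 16 := by nlinarith [mul_pos hapos hspos, hss]
  -- bounds on ψ
  have hπ : Real.pi > 3.141592 := Real.pi_gt_d6
  have hsqrtπ : (1.772:ℝ) ≤ Real.sqrt Real.pi := by
    exact (Real.le_sqrt (by norm_num) (by linarith)).mpr (by nlinarith)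
  have hsqrtB : (10:ℝ) ≤ Real.sqrt B :=
    (Real.le_sqrt (by norm_num) (by linarith)).mpr (by norm_num; linarith)
  have hsqrtBpos : (0:ℝ) < Real.sqrt B := by linarith
  have hsqrtπpos : (0:ℝ) < Real.sqrt Real.pi := by linarith
  set x := b₁ / Real.sqrt (B * R) with hx_def
  have hBR : Real.sqrt (B * R) = Real.sqrt B * s := Real.sqrt_mul (by linarith) R
  have hxval : x = 2 / (Real.sqrt Real.pi * (Real.sqrt B * s)) := by
    rw [hx_def, hb₁, hBR, div_div]
  have hxpos : 0 < x := by rw [hxval]; positivity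
  have hxs : x * s ≤ 0.1129 := by
    have h17 : (17.72:ℝ) ≤ Real.sqrt Real.pi * Real.sqrt B := by nlinarith
    have h17s : 17.72 * s ≤ Real.sqrt Real.pi * Real.sqrt B * s :=
      mul_le_mul_of_nonneg_right h17 hspos.le
    rw [hxval, div_mul_eq_mul_div, div_le_iff₀ (by positivity)]
    nlinarith
  have hx : x ≤ 0.0113 := by nlinarith
  have h1x : (0:ℝ) < 1 - x := by linarith
  have hψval : ψ = -Real.log (1 - x) := hψ
  have hψ0 : 0 ≤ ψ := by
    rw [hψval]
    simp only [neg_nonneg]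
    exact Real.log_nonpos (by linarith) (by linarith)
  have hψle : ψ ≤ (1 - x)⁻¹ - 1 := by
    rw [hψval, ← Real.log_inv]
    exact Real.log_le_sub_one_of_pos (by positivity)
  have hinv : (1 - x)⁻¹ - 1 = x / (1 - x) := by field_simp; ring
  have hψx : ψ ≤ 1.012 * x := by
    rw [hinv] at hψle
    have : x / (1 - x) ≤ 1.012 * x := by
      rw [div_le_iff₀ h1x]; nlinarith
    linarith
  have hψs : ψ * s ≤ 0.1143 := by nlinarith
  have hψ012 : ψ ≤ 0.012 := by nlinarith
  -- the integrand
  set g : ℝ → ℝ := fun t => Real.exp (-a * t ^ 2 - (ψ + a) * t - ψ) with hg_def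
  have hgcont : Continuous g := by
    apply Real.continuous_exp.comp; continuity
  -- piece lemma
  have piece : ∀ c K : ℝ, 1/5 ≤ c → c ≤ 2 → 5/8 * c^2 + 0.177 * c + 0.012 ≤ K →
      s / 5 * Real.exp (-K) ≤ ∫ t in ((c - 1/5) * s)..(c * s), g t := by
    intro c K hc1 hc2 hK
    have hpq : (c - 1/5) * s ≤ c * s := by nlinarith only [hspos]
    have hpt : ∀ t ∈ Set.Icc ((c - 1/5) * s) (c * s), Real.exp (-K) ≤ g t := by
      intro t ht
      obtain ⟨ht1, ht2⟩ := ht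
      have ht0 : 0 ≤ t :=
        le_trans (mul_nonneg (by linarith only [hc1]) hspos.le) ht1
      apply Real.exp_le_exp.mpr
      have h1 : a * t ^ 2 ≤ 5/8 * c ^ 2 := by
        have e1 : t ^ 2 ≤ (c * s) ^ 2 := pow_le_pow_left₀ ht0 ht2 2
        have e2 : a * t ^ 2 ≤ a * (c * s) ^ 2 := mul_le_mul_of_nonneg_left e1 hapos.le
        have e3 : a * (c * s) ^ 2 = c ^ 2 * (a * s ^ 2) := by ring
        have e4 : c ^ 2 * (a * R) ≤ c ^ 2 * (5/8) := mul_le_mul_of_nonneg_left haR (sq_nonneg c)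
        rw [e3, hss] at e2
        linarith only [e2, e4]
      have h2 : (ψ + a) * t ≤ 0.177 * c := by
        have hψa : 0 ≤ ψ + a := by linarith only [hψ0, hapos]
        have e1 : (ψ + a) * t ≤ (ψ + a) * (c * s) := mul_le_mul_of_nonneg_left ht2 hψa
        have e2 : (ψ + a) * (c * s) = c * (ψ * s + a * s) := by ring
        have e3 : c * (ψ * s + a * s) ≤ c * 0.177 :=
          mul_le_mul_of_nonneg_left (by linarith only [hψs, has]) (by linarith only [hc1])
        rw [e2] at e1
        linarith only [e1, e3]
      linarith only [h1, h2, hψ012, hK]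
    calc s / 5 * Real.exp (-K)
        = ∫ _ in ((c - 1/5) * s)..(c * s), Real.exp (-K) := by
          rw [intervalIntegral.integral_const, smul_eq_mul]; ring_nf
      _ ≤ ∫ t in ((c - 1/5) * s)..(c * s), g t :=
          intervalIntegral.integral_mono_on hpq (intervalIntegrable_const)
            (hgcont.intervalIntegrable _ _) hpt
  -- split the integral
  have hend : δ * R = 2 * s := by
    rw [hδval, ← hss]; field_simp
  set P : ℕ → ℝ := fun i => (i : ℝ) / 5 * s with hP_def
  have hsplit : ∑ k ∈ Finset.range 10, ∫ t in P k..P (k+1), g t = ∫ t in (P 0)..(P 10), g t :=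
    intervalIntegral.sum_integral_adjacent_intervals
      (fun k _ => hgcont.intervalIntegrable _ _)
  have hP0 : P 0 = 0 := by simp [hP_def]
  have hP10 : P 10 = δ * R := by rw [hend, hP_def]; norm_num
  -- bound each piece
  have hpieces : ∀ k : ℕ, k < 10 →
      s / 5 * Real.exp (-(((k:ℝ)+1)^2/40 + 0.0354*((k:ℝ)+1) + 0.012)) ≤ ∫ t in P k..P (k+1), g t := by
    intro k hk
    have hkr : (k:ℝ) ≤ 9 := by exact_mod_cast Nat.lt_succ_iff.mp hk
    have hkr0 : (0:ℝ) ≤ (k:ℝ) := Nat.cast_nonneg k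
    have h1 : P k = (((k:ℝ)+1)/5 - 1/5) * s := by rw [hP_def]; ring_nf
    have h2 : P (k+1) = (((k:ℝ)+1)/5) * s := by rw [hP_def]; push_cast; ring_nf
    rw [h1, h2]
    apply piece _ _ (by linarith) (by linarith)
    apply le_of_eq; ring
  -- numeric lower bounds for each exponential term
  have hterm : ∀ k : ℕ, k < 10 →
      s / 5 * ((1 - (((k:ℝ)+1)^2/40 + 0.0354*((k:ℝ)+1) + 0.012)/16)^16) ≤ ∫ t in P k..P (k+1), g t := by
    intro k hk
    refine le_trans ?_ (hpieces k hk)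
    have hkr : (k:ℝ) ≤ 9 := by exact_mod_cast Nat.lt_succ_iff.mp hk
    have hkr0 : (0:ℝ) ≤ (k:ℝ) := Nat.cast_nonneg k
    have hsq : ((k:ℝ)+1)^2 ≤ 100 := by nlinarith only [hkr, hkr0]
    have := exp_neg_lb (((k:ℝ)+1)^2/40 + 0.0354*((k:ℝ)+1) + 0.012) (by positivity)
      (by linarith only [hsq, hkr, hkr0])
    have hs5 : (0:ℝ) ≤ s / 5 := by linarith
    exact mul_le_mul_of_nonneg_left this hs5
  -- sum everything
  have hsum : s / 5 * (∑ k ∈ Finset.range 10, (1 - (((k:ℝ)+1)^2/40 + 0.0354*((k:ℝ)+1) + 0.012)/16)^16)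
      ≤ ∫ t in (0:ℝ)..(δ * R), g t := by
    rw [← hP0, ← hP10, ← hsplit, Finset.mul_sum]
    exact Finset.sum_le_sum (fun k hk => hterm k (Finset.mem_range.mp hk))
  -- numeric evaluation of the sum
  have hnum : (4.178:ℝ) ≤ ∑ k ∈ Finset.range 10, (1 - (((k:ℝ)+1)^2/40 + 0.0354*((k:ℝ)+1) + 0.012)/16)^16 := by
    simp only [Finset.sum_range_succ, Finset.sum_range_zero]
    norm_num
  -- bound on sqrt(π/2)
  have hsqrtpi2 : Real.sqrt (Real.pi / 2) ≤ 1.2534 := by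
    have hπ' : Real.pi < 3.15 := Real.pi_lt_d2
    have h2 : Real.pi / 2 ≤ (1.2534:ℝ)^2 := by nlinarith [Real.pi_lt_d6]
    calc Real.sqrt (Real.pi / 2) ≤ Real.sqrt ((1.2534:ℝ)^2) := Real.sqrt_le_sqrt h2
      _ = 1.2534 := Real.sqrt_sq (by norm_num)
  calc (2 / 3) * Real.sqrt (Real.pi / 2) * Real.sqrt R
      ≤ (2/3) * 1.2534 * s := by
        apply mul_le_mul_of_nonneg_right _ (le_of_lt hspos)
        exact mul_le_mul_of_nonneg_left hsqrtpi2 (by norm_num)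
    _ ≤ s / 5 * 4.178 := by linarith only [hspos]
    _ ≤ s / 5 * (∑ k ∈ Finset.range 10, (1 - (((k:ℝ)+1)^2/40 + 0.0354*((k:ℝ)+1) + 0.012)/16)^16) := by
        apply mul_le_mul_of_nonneg_left hnum (by linarith)
    _ ≤ ∫ t in (0:ℝ)..(δ * R), g t := hsum
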